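/- Let K be an m×n real matrix, Q an n×n symmetric positive definite matrix, and c > 0. If η ∈ ℝⁿ satisfies ηᵀQ⁻¹η ≤ c, then Kη lies in the set {(c·KQKᵀ)^{1/2} y : ‖y‖₂ ≤ 1}. -/

import Mathlib

open Matrix

/-- The square root of a positive semidefinite matrix, as defined in Mathlib (Dec 2024). -/
noncomputable def Matrix.PosSemidef.sqrt {n : Type*} [Fintype n] [DecidableEq n]
    {A : Matrix n n ℝ} (hA : A.PosSemidef) : Matrix n n ℝ :=
  hA.1.eigenvectorUnitary.1 * diagonal ((↑) ∘ (√·) ∘ hA.1.eigenvalues) *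
  (star hA.1.eigenvectorUnitary : Matrix n n ℝ)

lemma Matrix.PosSemidef.sqrt_mul_self {n : Type*} [Fintype n] [DecidableEq n]
    {A : Matrix n n ℝ} (hA : A.PosSemidef) : hA.sqrt * hA.sqrt = A := by
  conv_rhs => rw [hA.1.spectral_theorem, Unitary.conjStarAlgAut_apply]
  unfold Matrix.PosSemidef.sqrt
  have hU : (star hA.1.eigenvectorUnitary : Matrix n n ℝ) * hA.1.eigenvectorUnitary.1 = 1 :=
    Unitary.coe_star_mul_self _
  calc _ = hA.1.eigenvectorUnitary.1 * (diagonal ((↑) ∘ (√·) ∘ hA.1.eigenvalues) *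
        ((star hA.1.eigenvectorUnitary : Matrix n n ℝ) * hA.1.eigenvectorUnitary.1) *
        diagonal ((↑) ∘ (√·) ∘ hA.1.eigenvalues)) *
        (star hA.1.eigenvectorUnitary : Matrix n n ℝ) := by simp only [Matrix.mul_assoc]
    _ = _ := by
      rw [hU, Matrix.mul_one, diagonal_mul_diagonal]
      congr 3
      ext i
      simp [Real.mul_self_sqrt (hA.eigenvalues_nonneg i)]

lemma Matrix.PosSemidef.posSemidef_sqrt {n : Type*} [Fintype n] [DecidableEq n]
    {A : Matrix n n ℝ} (hA : A.PosSemidef) : hA.sqrt.PosSemidef := by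
  unfold Matrix.PosSemidef.sqrt
  rw [star_eq_conjTranspose]
  refine PosSemidef.mul_mul_conjTranspose_same ?_ _
  rw [posSemidef_diagonal_iff]
  intro i
  simp [Real.sqrt_nonneg]

lemma mulVec_dotProduct' {p q : ℕ} (A : Matrix (Fin p) (Fin q) ℝ)
    (u : Fin q → ℝ) (z : Fin p → ℝ) : (A *ᵥ u) ⬝ᵥ z = u ⬝ᵥ (Aᵀ *ᵥ z) := by
  rw [dotProduct_comm, dotProduct_mulVec, dotProduct_comm (z ᵥ* A), ← mulVec_transpose]

lemma range_mul_transpose_self {m n : ℕ} (A : Matrix (Fin m) (Fin n) ℝ) :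
    LinearMap.range (A * Aᵀ).mulVecLin = LinearMap.range A.mulVecLin := by
  have hle : LinearMap.range (A * Aᵀ).mulVecLin ≤ LinearMap.range A.mulVecLin := by
    rintro x ⟨v, rfl⟩
    exact ⟨Aᵀ.mulVec v, by rw [mulVecLin_apply, mulVecLin_apply, mulVec_mulVec]⟩
  refine Submodule.eq_of_le_of_finrank_le hle ?_
  have h1 : (A * Aᵀ).rank = A.rank := rank_self_mul_transpose A
  simpa [Matrix.rank] using h1.ge

theorem stmt3 (m n : ℕ) (K : Matrix (Fin m) (Fin n) ℝ) (Q : Matrix (Fin n) (Fin n) ℝ)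
    (c : ℝ) (hQ : Q.PosDef) (hc : 0 < c)
    (hpsd : (c • (K * Q * Kᵀ)).PosSemidef)
    (η : Fin n → ℝ) (hη : η ⬝ᵥ Q⁻¹.mulVec η ≤ c) :
    ∃ y : Fin m → ℝ, (∑ i, y i ^ 2) ≤ 1 ∧ K.mulVec η = hpsd.sqrt.mulVec y := by
  obtain ⟨R, hRR, hRsym, hdetR⟩ :
      ∃ R : Matrix (Fin n) (Fin n) ℝ, R * R = Q ∧ Rᵀ = R ∧ IsUnit R.det := by
    refine ⟨hQ.posSemidef.sqrt, hQ.posSemidef.sqrt_mul_self, ?_, ?_⟩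
    · have := hQ.posSemidef.posSemidef_sqrt.isHermitian
      simpa [Matrix.IsHermitian, conjTranspose_eq_transpose_of_trivial] using this
    · have h2 : hQ.posSemidef.sqrt.det * hQ.posSemidef.sqrt.det = Q.det := by
        rw [← det_mul, hQ.posSemidef.sqrt_mul_self]
      have hQd : 0 < Q.det := hQ.det_pos
      refine isUnit_iff_ne_zero.2 fun h => ?_
      rw [h, mul_zero] at h2
      exact hQd.ne h2
  set A := K * R with hAdef
  have hAAT : A * Aᵀ = K * Q * Kᵀ := by
    rw [hAdef, transpose_mul, hRsym, Matrix.mul_assoc K R, ← Matrix.mul_assoc R R,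
      hRR, ← Matrix.mul_assoc]
  set M := hpsd.sqrt with hMdef
  have hMsym : Mᵀ = M := by
    have := hpsd.posSemidef_sqrt.isHermitian
    simpa [Matrix.IsHermitian, conjTranspose_eq_transpose_of_trivial] using this
  have hMM : M * M = c • (A * Aᵀ) := by rw [hAAT, hpsd.sqrt_mul_self]
  have hRRinv : R *ᵥ (R⁻¹ *ᵥ η) = η := by
    rw [mulVec_mulVec, mul_nonsing_inv _ hdetR, one_mulVec]
  have hmem : K.mulVec η ∈ LinearMap.range (A * Aᵀ).mulVecLin := by
    rw [range_mul_transpose_self]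
    refine ⟨R⁻¹.mulVec η, ?_⟩
    rw [mulVecLin_apply, hAdef, ← mulVec_mulVec, hRRinv]
  obtain ⟨u₀, hu₀⟩ := hmem
  rw [mulVecLin_apply] at hu₀
  set u : Fin m → ℝ := c⁻¹ • u₀ with hudef
  have hMy : M.mulVec (M.mulVec u) = K.mulVec η := by
    rw [mulVec_mulVec, hMM, hudef, smul_mulVec, mulVec_smul, hu₀,
      smul_smul, mul_inv_cancel₀ hc.ne', one_smul]
  refine ⟨M.mulVec u, ?_, hMy.symm⟩
  set y : Fin m → ℝ := M.mulVec u with hydef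
  set s : ℝ := ∑ i, y i ^ 2 with hsdef
  have hs0 : 0 ≤ s := Finset.sum_nonneg fun i _ => sq_nonneg _
  set a : Fin n → ℝ := Kᵀ.mulVec u with hadef
  set b : Fin n → ℝ := Aᵀ.mulVec u with hbdef
  set d : Fin n → ℝ := R⁻¹.mulVec η with hddef
  have hsyy : s = y ⬝ᵥ y := by
    rw [hsdef]; simp [dotProduct, pow_two]
  have hsuK : s = u ⬝ᵥ K.mulVec η := by
    rw [hsyy, hydef, mulVec_dotProduct', hMsym, hMy]
  have hsa : s = a ⬝ᵥ η := by
    rw [hsuK, dotProduct_mulVec, hadef, mulVec_transpose]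
  have hbb : c * (b ⬝ᵥ b) = s := by
    have h1 : b ⬝ᵥ b = u ⬝ᵥ ((A * Aᵀ) *ᵥ u) := by
      rw [hbdef, mulVec_dotProduct', transpose_transpose, mulVec_mulVec]
    have h2 : (A * Aᵀ) *ᵥ u = c⁻¹ • (K *ᵥ η) := by
      rw [hudef, mulVec_smul, hu₀]
    rw [h1, h2, dotProduct_smul, smul_eq_mul, ← hsuK]
    field_simp
  have hba : b = R *ᵥ a := by
    rw [hbdef, hadef, hAdef, transpose_mul, hRsym, ← mulVec_mulVec]
  have had : b ⬝ᵥ d = a ⬝ᵥ η := by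
    rw [hba, mulVec_dotProduct' R a d, hRsym, hRRinv]
  have hdd : d ⬝ᵥ d ≤ c := by
    have h1 : d ⬝ᵥ d = η ⬝ᵥ Q⁻¹.mulVec η := by
      rw [hddef, mulVec_dotProduct', transpose_nonsing_inv, hRsym, mulVec_mulVec,
        ← Matrix.mul_inv_rev, hRR]
    rw [h1]; exact hη
  have hCS : (b ⬝ᵥ d) ^ 2 ≤ (b ⬝ᵥ b) * (d ⬝ᵥ d) := by
    have := Finset.sum_mul_sq_le_sq_mul_sq Finset.univ b d
    simpa [dotProduct, pow_two] using this
  have hbb0 : 0 ≤ b ⬝ᵥ b := Finset.sum_nonneg fun i _ => mul_self_nonneg _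
  have hdd0 : 0 ≤ d ⬝ᵥ d := Finset.sum_nonneg fun i _ => mul_self_nonneg _
  have hs2 : s ^ 2 ≤ s := by
    calc s ^ 2 = (b ⬝ᵥ d) ^ 2 := by rw [had, ← hsa]
    _ ≤ (b ⬝ᵥ b) * (d ⬝ᵥ d) := hCS
    _ ≤ (b ⬝ᵥ b) * c := mul_le_mul_of_nonneg_left hdd hbb0
    _ = s := by rw [← hbb]; ring
  nlinarith [hs2, hs0]
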